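/- arXiv:2411.06715 — 7 statements merged into one kernel-verified Lean document; each statement's English description precedes it below -/
import Mathlib

section
/- Let p₁,…,p_{n−1} ∈ ℤⁿ be vectors that form a ℤ-basis of V ∩ ℤⁿ where V = span_ℝ(p₁,…,p_{n−1}) is an (n−1)-dimensional subspace of ℝⁿ, and let q ∈ ℤⁿ be a primitive vector spanning the orthogonal complement V^⊥. Then the determinant of the (n−1)×(n−1) Gram matrix [⟨p_i, p_j⟩]_{i,j=1}^{n−1} equals ⟨q, q⟩. -/
open Matrix BigOperators


lemma bezout {ι : Type*} [DecidableEq ι] (s : Finset ι) (f : ι → ℤ) :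
    ∃ a : ι → ℤ, ∑ i ∈ s, a i * f i = s.gcd f := by
  classical
  induction s using Finset.induction_on with
  | empty => exact ⟨0, by simp⟩
  | @insert i s hi ih =>
    obtain ⟨a, ha⟩ := ih
    set g := s.gcd f with hg
    refine ⟨Function.update (fun j => Int.gcdB (f i) g * a j) i (Int.gcdA (f i) g), ?_⟩
    rw [Finset.sum_insert hi, Finset.gcd_insert, ← Int.coe_gcd, Int.gcd_eq_gcd_ab,
      Function.update_self]
    have : ∑ j ∈ s, (Function.update (fun j => Int.gcdB (f i) g * a j) i (Int.gcdA (f i) g)) j * f j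
        = Int.gcdB (f i) g * ∑ j ∈ s, a j * f j := by
      rw [Finset.mul_sum]
      refine Finset.sum_congr rfl fun j hj => ?_
      rw [Function.update_of_ne (by rintro rfl; exact hi hj)]
      ring
    rw [this, ha]; ring

lemma det_updateRow_finset_sum {R : Type*} [CommRing R] {m : Type*} [DecidableEq m] [Fintype m]
    (A : Matrix m m R) (j : m) {ι : Type*} (t : Finset ι) (g : ι → (m → R)) :
    det (A.updateRow j (∑ k ∈ t, g k)) = ∑ k ∈ t, det (A.updateRow j (g k)) := by
  classical
  induction t using Finset.induction_on with
  | empty =>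
    simp only [Finset.sum_empty]
    exact det_eq_zero_of_row_eq_zero j (fun k => by simp)
  | @insert i s hi ih =>
    rw [Finset.sum_insert hi, det_updateRow_add, ih, Finset.sum_insert hi]

lemma det_updateRow_eq_sum {R : Type*} [CommRing R] {m : Type*} [DecidableEq m] [Fintype m]
    (A : Matrix m m R) (j : m) (x : m → R) :
    det (A.updateRow j x) = ∑ k, x k * det (A.updateRow j (Pi.single k 1)) := by
  have hx : x = ∑ k, x k • (Pi.single k (1 : R) : m → R) := by
    ext j'; simp [Pi.single_apply]
  conv_lhs => rw [hx]
  rw [det_updateRow_finset_sum]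
  exact Finset.sum_congr rfl fun k _ => det_updateRow_smul A j (x k) (Pi.single k 1)

lemma snoc_det_eq_sum {R : Type*} [CommRing R] {n : ℕ} (p : Fin n → Fin (n+1) → R)
    (x : Fin (n+1) → R) :
    (Matrix.of (Fin.snoc p x)).det
      = ∑ k, x k * (Matrix.of (Fin.snoc p (Pi.single k 1))).det := by
  have hM0 : ∀ y : Fin (n+1) → R,
      Matrix.of (Fin.snoc p y) = (Matrix.of (Fin.snoc p 0)).updateRow (Fin.last n) y := by
    intro y
    ext i j
    induction i using Fin.lastCases with
    | last => simp
    | cast k => simp [Matrix.updateRow_apply, (Fin.castSucc_lt_last k).ne]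
  rw [hM0, det_updateRow_eq_sum]
  exact Finset.sum_congr rfl fun k _ => by rw [← hM0]

lemma snoc_det_self {R : Type*} [CommRing R] {n : ℕ} (p : Fin n → Fin (n+1) → R) (i : Fin n) :
    (Matrix.of (Fin.snoc p (p i))).det = 0 := by
  refine Matrix.det_zero_of_row_eq (M := Matrix.of (Fin.snoc p (p i)))
    (i := Fin.castSucc i) (j := Fin.last n) (Fin.castSucc_lt_last i).ne ?_
  funext j
  simp

lemma snoc_map_cast {n : ℕ} (p : Fin n → Fin (n+1) → ℤ) (x : Fin (n+1) → ℤ) :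
    (Matrix.of (Fin.snoc p x)).map (Int.cast : ℤ → ℝ)
      = Matrix.of (Fin.snoc (fun i j => ((p i j : ℝ))) (fun j => (x j : ℝ))) := by
  ext i j
  induction i using Fin.lastCases with
  | last => simp
  | cast k => simp

lemma snoc_det_cast {n : ℕ} (p : Fin n → Fin (n+1) → ℤ) (x : Fin (n+1) → ℤ) :
    (((Matrix.of (Fin.snoc p x)).det : ℤ) : ℝ)
      = (Matrix.of (Fin.snoc (fun i j => ((p i j : ℝ))) (fun j => (x j : ℝ)))).det := by
  rw [← snoc_map_cast]
  exact (RingHom.map_det (Int.castRingHom ℝ) _)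

section helpers
variable {R : Type*} [CommRing R]

lemma sum_apply' {m ι : Type*} [Fintype ι] (t : Finset ι) (f : ι → m → R) (k : m) :
    (∑ i ∈ t, f i) k = ∑ i ∈ t, f i k := by
  simp [Finset.sum_apply]

end helpers

/-- the determinant of the Gram matrix of a ℤ-basis of `V ∩ ℤⁿ`
equals `⟨q,q⟩` for a primitive `q` spanning `V^⊥`. Here the ambient space is
`ℝ^(n+1)` and there are `n` vectors `p i`. -/
theorem gram_det_eq_q_norm_sq (n : ℕ)
    (p : Fin n → Fin (n + 1) → ℤ) (q : Fin (n + 1) → ℤ)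
    (hLI : LinearIndependent ℝ (fun i => fun j => ((p i j : ℝ))))
    (hbasis : ∀ x : Fin (n + 1) → ℤ,
      ((fun j => (x j : ℝ)) ∈
          Submodule.span ℝ (Set.range (fun i => fun j => ((p i j : ℝ))))) →
        ∃ c : Fin n → ℤ, x = ∑ i, c i • p i)
    (hprim : Finset.univ.gcd q = 1)
    (horth : ∀ i, dotProduct q (p i) = 0) :
    Matrix.det (Matrix.of fun i j => dotProduct (p i) (p j)) =
      dotProduct q q := by
  classical
  have hq0 : q ≠ 0 := by
    rintro rfl
    have h0 : Finset.univ.gcd (0 : Fin (n+1) → ℤ) = 0 :=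
      Finset.gcd_eq_zero_iff.2 fun i _ => rfl
    rw [h0] at hprim
    exact absurd hprim (by norm_num)
  have hQpos : 0 < ∑ k, q k * q k := by
    obtain ⟨j, hj⟩ := Function.ne_iff.1 hq0
    refine Finset.sum_pos' (fun k _ => mul_self_nonneg _) ⟨j, Finset.mem_univ j, ?_⟩
    exact mul_self_pos.2 hj
  have hqpR : ∀ i, ∑ k, (q k : ℝ) * (p i k : ℝ) = 0 := by
    intro i
    have h := congrArg (Int.cast : ℤ → ℝ) (horth i)
    push_cast [dotProduct] at h
    exact h
  have hQRpos : (0:ℝ) < ∑ k, (q k : ℝ) * (q k : ℝ) := by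
    have := congrArg (Int.cast : ℤ → ℝ) (rfl : (∑ k, q k * q k) = ∑ k, q k * q k)
    push_cast at this
    calc (0:ℝ) < ((∑ k, q k * q k : ℤ) : ℝ) := by exact_mod_cast hQpos
    _ = _ := by push_cast; rfl
  have hLIsnoc : LinearIndependent ℝ
      (Fin.snoc (fun i => fun j => ((p i j : ℝ))) (fun j => (q j : ℝ))) := by
    rw [Fintype.linearIndependent_iff]
    intro g hg
    have hsplit : ∑ i : Fin (n+1),
        g i • Fin.snoc (fun i => fun j => ((p i j : ℝ))) (fun j => (q j : ℝ)) i
        = (∑ i : Fin n, g i.castSucc • (fun j => ((p i j : ℝ)))) + g (Fin.last n) • (fun j => (q j : ℝ)) := by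
      rw [Fin.sum_univ_castSucc]
      simp
    rw [hsplit] at hg
    have hdot : g (Fin.last n) * (∑ k, (q k : ℝ) * (q k : ℝ)) = 0 := by
      have h := congrArg (fun w : Fin (n+1) → ℝ => ∑ k, (q k : ℝ) * w k) hg
      simp only [Pi.add_apply, Pi.smul_apply, sum_apply', smul_eq_mul, Pi.zero_apply,
        mul_add, Finset.sum_add_distrib, mul_zero, Finset.sum_const_zero,
        Finset.mul_sum] at h
      rw [Finset.sum_comm] at h
      calc g (Fin.last n) * (∑ k, (q k : ℝ) * (q k : ℝ))
          = ∑ k, (q k:ℝ) * (g (Fin.last n) * (q k:ℝ)) := by rw [Finset.mul_sum]; congr 1; ext k; ring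
        _ = (∑ i : Fin n, ∑ k, (q k:ℝ) * (g i.castSucc * (p i k : ℝ)))
            + ∑ k, (q k:ℝ) * (g (Fin.last n) * (q k:ℝ)) := by
            have hz : ∑ i : Fin n, ∑ k, (q k:ℝ) * (g i.castSucc * (p i k : ℝ)) = 0 := by
              refine Finset.sum_eq_zero fun i _ => ?_
              calc ∑ k, (q k:ℝ) * (g i.castSucc * (p i k : ℝ))
                  = g i.castSucc * ∑ k, (q k : ℝ) * (p i k : ℝ) := by
                    rw [Finset.mul_sum]; congr 1; ext k; ring
                _ = 0 := by rw [hqpR]; ring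
            rw [hz, zero_add]
        _ = 0 := h
    have hlast : g (Fin.last n) = 0 := by
      rcases mul_eq_zero.1 hdot with h | h
      · exact h
      · exact absurd h hQRpos.ne'
    have hcast : ∀ i : Fin n, g i.castSucc = 0 := by
      rw [hlast, zero_smul, add_zero] at hg
      exact Fintype.linearIndependent_iff.1 hLI (fun i => g i.castSucc) hg
    intro i
    induction i using Fin.lastCases with
    | last => exact hlast
    | cast k => exact hcast k
  have hcard : Fintype.card (Fin (n+1)) = Module.finrank ℝ (Fin (n+1) → ℝ) := by simp
  have hspan : ∀ y : Fin (n+1) → ℝ, ∃ a : Fin (n+1) → ℝ,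
      ∑ i, a i • Fin.snoc (fun i => fun j => ((p i j : ℝ))) (fun j => (q j : ℝ)) i = y := by
    intro y
    have htop := hLIsnoc.span_eq_top_of_card_eq_finrank hcard
    have hy : y ∈ Submodule.span ℝ (Set.range
        (Fin.snoc (fun i => fun j => ((p i j : ℝ))) (fun j => (q j : ℝ)))) := by
      rw [htop]; trivial
    exact (Submodule.mem_span_range_iff_exists_fun ℝ).1 hy
  have hdet0 : (Matrix.of ((Fin.snoc (fun i => fun j => ((p i j : ℝ)))
      (fun j => (q j : ℝ))) : Fin (n+1) → Fin (n+1) → ℝ)).det ≠ 0 := by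
    intro h
    obtain ⟨v, hv0, hv⟩ := Matrix.exists_vecMul_eq_zero_iff.2 h
    apply hv0
    have hsum : ∑ i, v i • ((Fin.snoc (fun i => fun j => ((p i j : ℝ)))
        (fun j => (q j : ℝ))) : Fin (n+1) → Fin (n+1) → ℝ) i = 0 := by
      funext j
      have hj := congrFun hv j
      simpa [Matrix.vecMul, dotProduct, sum_apply'] using hj
    funext i
    exact Fintype.linearIndependent_iff.1 hLIsnoc v hsum i
  set c : Fin (n+1) → ℤ := fun k => (Matrix.of (Fin.snoc p (Pi.single k 1))).det with hc
  have hD : ∀ x : Fin (n+1) → ℤ, (Matrix.of (Fin.snoc p x)).det = ∑ k, x k * c k :=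
    fun x => snoc_det_eq_sum p x
  have hcp : ∀ i, ∑ k, p i k * c k = 0 := fun i => by rw [← hD]; exact snoc_det_self p i
  have hcq : ∑ k, q k * c k ≠ 0 := by
    rw [← hD]
    intro h
    apply hdet0
    have hcast := snoc_det_cast p q
    rw [h] at hcast
    push_cast at hcast
    exact hcast.symm
  have hcpR : ∀ i, ∑ k, (p i k : ℝ) * (c k : ℝ) = 0 := by
    intro i
    have h := congrArg (Int.cast : ℤ → ℝ) (hcp i)
    push_cast at h
    exact h
  obtain ⟨a, ha⟩ := hspan (fun k => (c k : ℝ))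
  rw [Fin.sum_univ_castSucc] at ha
  simp only [Fin.snoc_castSucc, Fin.snoc_last] at ha
  have hak : ∀ k, (∑ i : Fin n, a i.castSucc * (p i k : ℝ)) + a (Fin.last n) * (q k : ℝ)
      = (c k : ℝ) := by
    intro k
    have := congrFun ha k
    simpa [sum_apply'] using this
  set t := a (Fin.last n) with ht
  set u : Fin (n+1) → ℝ := fun k => ∑ i : Fin n, a i.castSucc * (p i k : ℝ) with hu
  have hucR : ∑ k, u k * (c k : ℝ) = 0 := by
    simp only [hu, Finset.sum_mul]
    rw [Finset.sum_comm]
    refine Finset.sum_eq_zero fun i _ => ?_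
    calc ∑ k, a i.castSucc * (p i k : ℝ) * (c k : ℝ)
        = a i.castSucc * ∑ k, (p i k : ℝ) * (c k : ℝ) := by
          rw [Finset.mul_sum]; congr 1; ext k; ring
      _ = 0 := by rw [hcpR]; ring
  have huqR : ∑ k, u k * (q k : ℝ) = 0 := by
    simp only [hu, Finset.sum_mul]
    rw [Finset.sum_comm]
    refine Finset.sum_eq_zero fun i _ => ?_
    calc ∑ k, a i.castSucc * (p i k : ℝ) * (q k : ℝ)
        = a i.castSucc * ∑ k, (q k : ℝ) * (p i k : ℝ) := by
          rw [Finset.mul_sum]; congr 1; ext k; ring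
      _ = 0 := by rw [hqpR]; ring
  have huk : ∀ k, u k = (c k : ℝ) - t * (q k : ℝ) := by
    intro k
    have := hak k
    simp only [hu]
    linarith
  have huu : ∑ k, u k * u k = 0 := by
    calc ∑ k, u k * u k = ∑ k, (u k * (c k : ℝ) - t * (u k * (q k : ℝ))) := by
          refine Finset.sum_congr rfl fun k _ => ?_
          rw [huk k]; ring
      _ = 0 := by
          rw [Finset.sum_sub_distrib, hucR, ← Finset.mul_sum, huqR]; ring
  have hu0 : ∀ k, u k = 0 := by
    intro k
    have := (Finset.sum_eq_zero_iff_of_nonneg (fun k _ => mul_self_nonneg (u k))).1 huu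
      k (Finset.mem_univ k)
    exact mul_self_eq_zero.1 this
  have hct : ∀ k, (c k : ℝ) = t * (q k : ℝ) := by
    intro k
    have h1 := huk k
    rw [hu0 k] at h1
    linarith
  obtain ⟨b, hb⟩ := bezout Finset.univ q
  rw [hprim] at hb
  set m : ℤ := ∑ j, b j * c j with hmdef
  have hmt : (m : ℝ) = t := by
    push_cast [hmdef]
    calc ∑ j, (b j : ℝ) * (c j : ℝ) = ∑ j, t * ((b j : ℝ) * (q j : ℝ)) := by
          refine Finset.sum_congr rfl fun j _ => ?_
          rw [hct j]; ring
      _ = t * ∑ j, (b j : ℝ) * (q j : ℝ) := by rw [Finset.mul_sum]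
      _ = t := by
          have : ((∑ i, b i * q i : ℤ) : ℝ) = 1 := by rw [hb]; norm_num
          push_cast at this
          rw [this, mul_one]
  have hmq : ∀ k, c k = m * q k := by
    intro k
    have : ((c k : ℤ) : ℝ) = ((m * q k : ℤ) : ℝ) := by
      push_cast
      rw [hct k, hmt]
    exact_mod_cast this
  have hm0 : m ≠ 0 := by
    intro h
    apply hcq
    refine Finset.sum_eq_zero fun k _ => ?_
    rw [hmq k, h]; ring
  set g := Finset.univ.gcd c with hg
  obtain ⟨w, hw⟩ := bezout Finset.univ c
  have hgdvd : ∀ x : Fin (n+1) → ℤ, g ∣ ∑ k, x k * c k :=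
    fun x => Finset.dvd_sum fun k _ => Dvd.dvd.mul_left (Finset.gcd_dvd (Finset.mem_univ k)) _
  have hrep : ∀ j : Fin (n+1), ∃ coef : Fin (n+1) → ℤ,
      (Pi.single j 1 : Fin (n+1) → ℤ) = ∑ i, coef i • Fin.snoc p w i := by
    intro j
    obtain ⟨m', hm'⟩ := hgdvd (Pi.single j 1)
    set y : Fin (n+1) → ℤ := fun k => (Pi.single j 1 : Fin (n+1) → ℤ) k - m' * w k with hy
    have hyc : ∑ k, y k * c k = 0 := by
      simp only [hy, sub_mul, Finset.sum_sub_distrib]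
      have h5 : ∑ k, m' * w k * c k = m' * ∑ k, w k * c k := by
        rw [Finset.mul_sum]; congr 1; ext k; ring
      rw [hm', h5, hw, hg]
      ring
    have hyq : ∑ k, q k * y k = 0 := by
      have h2 : m * ∑ k, q k * y k = 0 := by
        calc m * ∑ k, q k * y k = ∑ k, y k * (m * q k) := by
              rw [Finset.mul_sum]; congr 1; ext k; ring
          _ = ∑ k, y k * c k := Finset.sum_congr rfl fun k _ => by rw [hmq k]
          _ = 0 := hyc
      exact (mul_eq_zero.1 h2).resolve_left hm0
    obtain ⟨a2, ha2⟩ := hspan (fun k => (y k : ℝ))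
    rw [Fin.sum_univ_castSucc] at ha2
    simp only [Fin.snoc_castSucc, Fin.snoc_last] at ha2
    have ha2k : ∀ k, (∑ i : Fin n, a2 i.castSucc * (p i k : ℝ)) + a2 (Fin.last n) * (q k : ℝ)
        = (y k : ℝ) := by
      intro k
      have := congrFun ha2 k
      simpa [sum_apply'] using this
    have hyqR : ∑ k, (q k : ℝ) * (y k : ℝ) = 0 := by
      have h := congrArg (Int.cast : ℤ → ℝ) hyq; push_cast at h; exact h
    have hblast : a2 (Fin.last n) = 0 := by
      have h3 : ∑ k, (q k : ℝ) * ((∑ i : Fin n, a2 i.castSucc * (p i k : ℝ))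
          + a2 (Fin.last n) * (q k : ℝ)) = 0 := by
        rw [← hyqR]; exact Finset.sum_congr rfl fun k _ => by rw [ha2k k]
      simp only [mul_add, Finset.sum_add_distrib, Finset.mul_sum] at h3
      rw [Finset.sum_comm] at h3
      have h4 : ∑ i : Fin n, ∑ k, (q k : ℝ) * (a2 i.castSucc * (p i k : ℝ)) = 0 := by
        refine Finset.sum_eq_zero fun i _ => ?_
        calc ∑ k, (q k : ℝ) * (a2 i.castSucc * (p i k : ℝ))
            = a2 i.castSucc * ∑ k, (q k : ℝ) * (p i k : ℝ) := by
              rw [Finset.mul_sum]; congr 1; ext k; ring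
          _ = 0 := by rw [hqpR]; ring
      rw [h4, zero_add] at h3
      have h6 : a2 (Fin.last n) * ∑ k, (q k : ℝ) * (q k : ℝ) = 0 := by
        rw [Finset.mul_sum]; rw [← h3]; congr 1; ext k; ring
      exact (mul_eq_zero.1 h6).resolve_right hQRpos.ne'
    have hyspan : (fun k => (y k : ℝ)) ∈ Submodule.span ℝ
        (Set.range (fun i => fun j => ((p i j : ℝ)))) := by
      refine (Submodule.mem_span_range_iff_exists_fun ℝ).2 ⟨fun i => a2 i.castSucc, ?_⟩
      funext k
      rw [sum_apply']
      have := ha2k k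
      rw [hblast, zero_mul, add_zero] at this
      simpa using this
    obtain ⟨d, hd⟩ := hbasis y hyspan
    refine ⟨Fin.snoc d m', ?_⟩
    rw [Fin.sum_univ_castSucc]
    simp only [Fin.snoc_castSucc, Fin.snoc_last]
    funext k
    have hdk := congrFun hd k
    simp only [sum_apply', Pi.smul_apply, smul_eq_mul] at hdk
    simp only [Pi.add_apply, sum_apply', Pi.smul_apply, smul_eq_mul]
    rw [← hdk]
    simp only [hy]
    ring
  set B : Matrix (Fin (n+1)) (Fin (n+1)) ℤ := Matrix.of fun j => (hrep j).choose with hB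
  have hBM : B * Matrix.of (Fin.snoc p w) = 1 := by
    ext j k
    have hspec := congrFun ((hrep j).choose_spec) k
    simp only [sum_apply', Pi.smul_apply, smul_eq_mul] at hspec
    rw [Matrix.mul_apply, Matrix.one_apply]
    rw [show ∑ i, B j i * (Matrix.of (Fin.snoc p w)) i k
        = ∑ i, (hrep j).choose i * (Fin.snoc p w : Fin (n+1) → Fin (n+1) → ℤ) i k from rfl]
    rw [← hspec]
    simp [Pi.single_apply, eq_comm]
  have hgunit : IsUnit g := by
    have hdetB := congrArg Matrix.det hBM
    rw [Matrix.det_mul, Matrix.det_one, hD w, hw] at hdetB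
    exact IsUnit.of_mul_eq_one (a := g) B.det (by rw [mul_comm]; exact hdetB)
  have hmu : IsUnit m :=
    isUnit_of_dvd_unit (Finset.dvd_gcd fun k _ => ⟨q k, hmq k⟩) hgunit
  have hm1 : m = 1 ∨ m = -1 := Int.isUnit_iff.1 hmu
  have hdetA : (Matrix.of (Fin.snoc p q)).det = m * ∑ k, q k * q k := by
    rw [hD q, Finset.mul_sum]
    exact Finset.sum_congr rfl fun k _ => by rw [hmq k]; ring
  have hsq : ((Matrix.of (Fin.snoc p q)) * (Matrix.of (Fin.snoc p q))ᵀ).det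
      = (∑ k, q k * q k) * (∑ k, q k * q k) := by
    rw [Matrix.det_mul, Matrix.det_transpose, hdetA]
    rcases hm1 with h | h <;> rw [h] <;> ring
  have hblock : ((Matrix.of (Fin.snoc p q)) * (Matrix.of (Fin.snoc p q))ᵀ).det
      = (∑ k, q k * q k) * (Matrix.of fun i j => dotProduct (p i) (p j)).det := by
    rw [Matrix.det_succ_row _ (Fin.last n), Fin.sum_univ_castSucc]
    have hzero : ∀ k : Fin n, ((Matrix.of (Fin.snoc p q)) * (Matrix.of (Fin.snoc p q))ᵀ)
        (Fin.last n) k.castSucc = 0 := by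
      intro k
      rw [Matrix.mul_apply]
      simp only [Matrix.transpose_apply, Matrix.of_apply, Fin.snoc_last, Fin.snoc_castSucc]
      exact horth k
    rw [Finset.sum_eq_zero (fun k _ => by rw [hzero k]; ring), zero_add]
    have hQ : ((Matrix.of (Fin.snoc p q)) * (Matrix.of (Fin.snoc p q))ᵀ)
        (Fin.last n) (Fin.last n) = ∑ k, q k * q k := by
      rw [Matrix.mul_apply]
      simp [Fin.snoc_last]
    have hsub : ((Matrix.of (Fin.snoc p q)) * (Matrix.of (Fin.snoc p q))ᵀ).submatrix
        (Fin.last n).succAbove (Fin.last n).succAbove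
        = Matrix.of fun i j => dotProduct (p i) (p j) := by
      ext i j
      simp [Matrix.submatrix_apply, Fin.succAbove_last, Matrix.mul_apply,
        Fin.snoc_castSucc, dotProduct]
    rw [hQ, hsub]
    have hsign : (-1 : ℤ) ^ (((Fin.last n : Fin (n+1)) : ℕ) + ((Fin.last n : Fin (n+1)) : ℕ)) = 1 :=
      Even.neg_one_pow ⟨(Fin.last n : ℕ), rfl⟩
    rw [hsign]
    ring
  have hfinal := mul_left_cancel₀ hQpos.ne' (hblock.symm.trans hsq).symm
  rw [← hfinal]
  rfl
end

section
/- Let p₁,…,p_{n−1} ∈ ℤⁿ form a ℤ-basis of V ∩ ℤⁿ for the (n−1)-dimensional subspace V they span over ℝ, and let q ∈ ℤⁿ be a primitive basis vector of V^⊥. Then det [p₁ ⋯ p_{n−1} q] = ±⟨q, q⟩. -/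
open Matrix BigOperators

/-- Bézout for a finite family of integers. -/
lemma my_exists_gcd_comb {ι : Type*} [DecidableEq ι] (s : Finset ι) (q : ι → ℤ) :
    ∃ x : ι → ℤ, (s.gcd q : ℤ) = ∑ i ∈ s, x i * q i := by
  induction s using Finset.induction with
  | empty => exact ⟨0, by simp⟩
  | @insert a s ha ih =>
    obtain ⟨x, hx⟩ := ih
    refine ⟨Function.update (fun i => Int.gcdB (q a) (s.gcd q) * x i) a
      (Int.gcdA (q a) (s.gcd q)), ?_⟩
    rw [Finset.gcd_insert, Finset.sum_insert ha, Function.update_self]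
    have h1 : GCDMonoid.gcd (q a) (s.gcd q) = (Int.gcd (q a) (s.gcd q) : ℤ) :=
      (Int.coe_gcd _ _).symm
    rw [h1, Int.gcd_eq_gcd_ab]
    have h2 : ∑ i ∈ s, Function.update (fun i => Int.gcdB (q a) (s.gcd q) * x i) a
        (Int.gcdA (q a) (s.gcd q)) i * q i
        = Int.gcdB (q a) (s.gcd q) * ∑ i ∈ s, x i * q i := by
      rw [Finset.mul_sum]
      refine Finset.sum_congr rfl fun i hi => ?_
      rw [Function.update_of_ne (by rintro rfl; exact ha hi)]
      ring
    rw [h2, ← hx]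
    ring

/-- Any integer vector orthogonal to `q` is a ℤ-combination of the `p i`. -/
lemma my_span_lemma (n : ℕ) (p : Fin n → Fin (n + 1) → ℤ) (q : Fin (n + 1) → ℤ)
    (hLI : LinearIndependent ℝ (fun i => fun j => ((p i j : ℝ))))
    (hbasis : ∀ x : Fin (n + 1) → ℤ,
      ((fun j => (x j : ℝ)) ∈
          Submodule.span ℝ (Set.range (fun i => fun j => ((p i j : ℝ))))) →
        ∃ c : Fin n → ℤ, x = ∑ i, c i • p i)
    (hq : q ≠ 0)
    (horth : ∀ i, dotProduct q (p i) = 0)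
    (y : Fin (n + 1) → ℤ) (hy : dotProduct q y = 0) :
    ∃ c : Fin n → ℤ, y = ∑ i, c i • p i := by
  set f : (Fin (n + 1) → ℝ) →ₗ[ℝ] ℝ :=
    ∑ i, (q i : ℝ) • (LinearMap.proj i : (Fin (n + 1) → ℝ) →ₗ[ℝ] ℝ) with hf
  have hfapp : ∀ v : Fin (n + 1) → ℝ, f v = ∑ i, (q i : ℝ) * v i := by
    intro v
    simp [hf, LinearMap.sum_apply]
  obtain ⟨j, hj⟩ : ∃ j, q j ≠ 0 := by
    by_contra h
    push_neg at h
    exact hq (funext h)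
  have hfne : f ≠ 0 := by
    intro h
    apply hj
    have := congrArg (fun g => g (Pi.single j (1:ℝ))) h
    simp only [LinearMap.zero_apply] at this
    rw [hfapp] at this
    simp [Pi.single_apply, Finset.sum_ite_eq'] at this
    exact_mod_cast this
  have hker : Module.finrank ℝ (LinearMap.ker f) = n := by
    have h1 := Module.Dual.finrank_ker_add_one_of_ne_zero hfne
    have h2 : Module.finrank ℝ (Fin (n + 1) → ℝ) = n + 1 := by
      simp [Module.finrank_pi]
    omega
  have hle : Submodule.span ℝ (Set.range (fun i => fun j => ((p i j : ℝ))))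
      ≤ LinearMap.ker f := by
    rw [Submodule.span_le]
    rintro _ ⟨i, rfl⟩
    rw [SetLike.mem_coe, LinearMap.mem_ker, hfapp]
    have h0 := horth i
    rw [dotProduct] at h0
    have h1 : ((∑ k, q k * p i k : ℤ) : ℝ) = 0 := by rw [h0]; norm_num
    push_cast at h1
    exact h1
  have hspan : Submodule.span ℝ (Set.range (fun i => fun j => ((p i j : ℝ))))
      = LinearMap.ker f := by
    apply Submodule.eq_of_le_of_finrank_le hle
    rw [hker, finrank_span_eq_card hLI, Fintype.card_fin]
  apply hbasis
  rw [hspan, LinearMap.mem_ker, hfapp]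
  rw [dotProduct] at hy
  have h1 : ((∑ k, q k * y k : ℤ) : ℝ) = 0 := by rw [hy]; norm_num
  push_cast at h1
  exact h1

/-- for a ℤ-basis `p` of `V ∩ ℤⁿ` and a primitive `q` spanning
`V^⊥`, the determinant of the matrix with columns `p₁,…,pₙ,q` equals `±⟨q,q⟩`. -/
theorem det_cols_eq_pm_q_norm_sq (n : ℕ)
    (p : Fin n → Fin (n + 1) → ℤ) (q : Fin (n + 1) → ℤ)
    (hLI : LinearIndependent ℝ (fun i => fun j => ((p i j : ℝ))))
    (hbasis : ∀ x : Fin (n + 1) → ℤ,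
      ((fun j => (x j : ℝ)) ∈
          Submodule.span ℝ (Set.range (fun i => fun j => ((p i j : ℝ))))) →
        ∃ c : Fin n → ℤ, x = ∑ i, c i • p i)
    (hprim : Finset.univ.gcd q = 1)
    (horth : ∀ i, dotProduct q (p i) = 0) :
    Matrix.det (Matrix.of fun i j =>
        (Fin.snoc p q : Fin (n + 1) → Fin (n + 1) → ℤ) j i) =
        dotProduct q q ∨
    Matrix.det (Matrix.of fun i j =>
        (Fin.snoc p q : Fin (n + 1) → Fin (n + 1) → ℤ) j i) =
        -dotProduct q q := by
  -- q ≠ 0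
  have hq : q ≠ 0 := by
    intro h
    have h0 : Finset.univ.gcd q = 0 :=
      Finset.gcd_eq_zero_iff.mpr (fun i _ => by rw [h]; rfl)
    rw [hprim] at h0
    exact one_ne_zero h0
  -- the key consequence of the span/basis hypotheses
  have hA : ∀ y : Fin (n + 1) → ℤ, dotProduct q y = 0 →
      ∃ c : Fin n → ℤ, y = ∑ i, c i • p i :=
    my_span_lemma n p q hLI hbasis hq horth
  -- a vector x with ⟨q, x⟩ = 1
  obtain ⟨x, hx⟩ : ∃ x : Fin (n + 1) → ℤ, dotProduct q x = 1 := by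
    obtain ⟨x, hx⟩ := my_exists_gcd_comb Finset.univ q
    refine ⟨x, ?_⟩
    rw [hprim] at hx
    rw [dotProduct, Finset.sum_congr rfl fun i _ => mul_comm (q i) (x i), ← hx]
  set Nx : Matrix (Fin (n+1)) (Fin (n+1)) ℤ := Matrix.of (Fin.snoc p x) with hNx
  set Q : ℤ := dotProduct q q with hQ
  -- Nx is left-invertible over ℤ, hence det Nx = ±1
  have hdetNx : Nx.det = 1 ∨ Nx.det = -1 := by
    have hcol : ∀ k : Fin (n+1), ∃ c : Fin n → ℤ,
        (Pi.single k 1 : Fin (n+1) → ℤ) = ∑ i, c i • p i + q k • x := by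
      intro k
      obtain ⟨c, hc⟩ := hA (Pi.single k 1 - q k • x) (by
        rw [dotProduct_sub, dotProduct_smul, hx, dotProduct_single]
        simp)
      exact ⟨c, by rw [← hc]; ring⟩
    choose c hc using hcol
    set W : Matrix (Fin (n+1)) (Fin (n+1)) ℤ :=
      Matrix.of (fun k => Fin.snoc (c k) (q k)) with hW
    have hWN : W * Nx = 1 := by
      ext k j
      rw [Matrix.mul_apply]
      have h3 : ∑ m, W k m * Nx m j
          = ∑ i : Fin n, c k i * p i j + q k * x j := by
        rw [Fin.sum_univ_castSucc]
        simp [hW, hNx]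
      rw [h3]
      have h4 := congrFun (hc k) j
      simp only [Finset.sum_apply, Pi.add_apply, Pi.smul_apply, smul_eq_mul] at h4
      rw [Matrix.one_apply, ← h4]
      by_cases h : k = j <;> simp [h, Pi.single_apply]
    have hU : IsUnit Nx.det := by
      have h5 := congrArg Matrix.det hWN
      rw [Matrix.det_mul, Matrix.det_one] at h5
      exact IsUnit.of_mul_eq_one _ ((mul_comm _ _).trans h5)
    exact Int.isUnit_iff.mp hU
  -- decompose q as a combination of the rows of Nx
  obtain ⟨c, hc⟩ := hA (Q • x - q) (by
    rw [dotProduct_sub, dotProduct_smul, hx]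
    simp [hQ])
  set w : Fin (n+1) → ℤ := Fin.snoc (fun i => -(c i)) Q with hw
  have hqcomb : q = ∑ m, w m • Nx m := by
    funext j
    have hcj := congrFun hc j
    simp only [Finset.sum_apply, Pi.sub_apply, Pi.smul_apply, smul_eq_mul] at hcj
    simp only [Finset.sum_apply, Pi.smul_apply, smul_eq_mul]
    rw [Fin.sum_univ_castSucc]
    simp only [hw, hNx, Fin.snoc_castSucc, Fin.snoc_last, Matrix.of_apply, neg_mul]
    rw [Finset.sum_neg_distrib]
    linarith [hcj]
  -- the target matrix is the transpose of the row matrix with rows p₁,…,pₙ,q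
  have hT : (Matrix.of fun i j => (Fin.snoc p q : Fin (n + 1) → Fin (n + 1) → ℤ) j i)
      = (Matrix.of (Fin.snoc p q))ᵀ := rfl
  have hR : (Matrix.of (Fin.snoc p q) : Matrix (Fin (n+1)) (Fin (n+1)) ℤ)
      = Nx.updateRow (Fin.last n) q := by
    ext m j
    refine Fin.lastCases ?_ ?_ m
    · simp [Matrix.updateRow_apply]
    · intro i
      rw [Matrix.updateRow_ne (Fin.castSucc_lt_last i).ne]
      simp [hNx]
  have hdet : (Matrix.of fun i j =>
      (Fin.snoc p q : Fin (n + 1) → Fin (n + 1) → ℤ) j i).det = Q * Nx.det := by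
    rw [hT, Matrix.det_transpose, hR, hqcomb, Matrix.det_updateRow_sum]
    simp [hw]
  rcases hdetNx with h | h
  · left; rw [hdet, h, mul_one]
  · right; rw [hdet, h]; ring
end

section
/- Let u₁,…,u_n, v₁,…,v_n be dual bases of ℝⁿ, V = span(p₁,…,p_{n−1}) with orthogonal complement spanned by q ≠ 0, and π(ξ) = (⟨p₁,ξ⟩,…,⟨p_{n−1},ξ⟩). Suppose π(v₁),…,π(v_{n−1}) are linearly independent, and the cone generated by π(v₁),…,π(v_n) contains a nontrivial linear subspace. Then ⟨u_n, q⟩ ≠ 0. -/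
open Matrix BigOperators


private lemma dp_sum {m k : Type*} [Fintype m] [Fintype k] (w : m → ℝ)
    (f : k → m → ℝ) : dotProduct w (∑ j, f j) = ∑ j, dotProduct w (f j) := by
  simp [dotProduct, Finset.mul_sum]
  rw [Finset.sum_comm]

private lemma sum_dp {m k : Type*} [Fintype m] [Fintype k] (w : m → ℝ)
    (f : k → m → ℝ) : dotProduct (∑ j, f j) w = ∑ j, dotProduct (f j) w := by
  simp [dotProduct, Finset.sum_mul]
  rw [Finset.sum_comm]

/-- with dual bases `u, v`, `V = span(p)` with orthogonal
complement spanned by `q ≠ 0`, and `π(ξ) = (⟨pₗ,ξ⟩)ₗ`, if `π(v₁),…,π(vₙ)` are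
linearly independent and the cone generated by all `π(vⱼ)` contains a
nontrivial subspace, then `⟨uₙ₊₁, q⟩ ≠ 0`. -/
theorem pairing_last_ne_zero_of_cone_subspace (n : ℕ)
    (u v : Fin (n + 1) → Fin (n + 1) → ℝ)
    (hdual : ∀ i j, dotProduct (u i) (v j) = if i = j then 1 else 0)
    (p : Fin n → Fin (n + 1) → ℝ)
    (hp : LinearIndependent ℝ p)
    (q : Fin (n + 1) → ℝ) (hq : q ≠ 0)
    (horth : ∀ l, dotProduct (p l) q = 0)
    (hLI : LinearIndependent ℝ
      (fun i : Fin n => fun l => dotProduct (p l) (v i.castSucc)))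
    (x : Fin n → ℝ) (hx : x ≠ 0)
    (hxc : ∃ a : Fin (n + 1) → ℝ, (∀ i, 0 ≤ a i) ∧
      x = ∑ j, a j • (fun l => dotProduct (p l) (v j)))
    (hnxc : ∃ b : Fin (n + 1) → ℝ, (∀ i, 0 ≤ b i) ∧
      -x = ∑ j, b j • (fun l => dotProduct (p l) (v j))) :
    dotProduct (u (Fin.last n)) q ≠ 0 := by
  -- u is linearly independent
  have huLI : LinearIndependent ℝ u := by
    rw [Fintype.linearIndependent_iff]
    intro g hg i
    have := congrArg (fun w => dotProduct w (v i)) hg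
    simp only [zero_dotProduct] at this
    rw [sum_dp] at this
    simpa [smul_dotProduct, hdual, Finset.sum_ite_eq'] using this
  -- u spans everything
  have hspan : Submodule.span ℝ (Set.range u) = ⊤ :=
    huLI.span_eq_top_of_card_eq_finrank (by simp)
  -- r := q - Σ (u j ⬝ q) • v j  is killed by every u i
  set r : Fin (n + 1) → ℝ := q - ∑ j, (dotProduct (u j) q) • v j with hr
  have hur : ∀ i, dotProduct (u i) r = 0 := by
    intro i
    rw [hr, dotProduct_sub, dp_sum]
    simp [dotProduct_smul, hdual, Finset.sum_ite_eq', smul_eq_mul]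
  have hr0 : r = 0 := by
    have hrmem : r ∈ Submodule.span ℝ (Set.range u) := by rw [hspan]; trivial
    obtain ⟨d, hd⟩ := (Submodule.mem_span_range_iff_exists_fun ℝ).mp hrmem
    have : dotProduct r r = 0 := by
      nth_rewrite 1 [← hd]
      rw [sum_dp]
      simp [smul_dotProduct, hur]
    exact dotProduct_self_eq_zero.mp this
  have hqeq : q = ∑ j, (dotProduct (u j) q) • v j := by
    have := sub_eq_zero.mp hr0
    simpa using this
  intro h
  -- coefficients for the castSucc part
  have hsum : ∑ i : Fin n,
      (dotProduct (u i.castSucc) q) •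
        (fun l => dotProduct (p l) (v i.castSucc)) = 0 := by
    funext l
    have h1 : dotProduct (p l) q = 0 := horth l
    rw [hqeq] at h1
    rw [dp_sum] at h1
    rw [Fin.sum_univ_castSucc] at h1
    simp only [dotProduct_smul, smul_eq_mul, h, zero_mul, mul_zero,
      add_zero] at h1
    simp only [Finset.sum_apply, Pi.smul_apply, smul_eq_mul, Pi.zero_apply]
    rw [← h1]
    try exact Finset.sum_congr rfl fun i _ => mul_comm _ _
  have hz : ∀ i : Fin n, dotProduct (u i.castSucc) q = 0 := by
    rw [Fintype.linearIndependent_iff] at hLI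
    exact hLI _ hsum
  apply hq
  rw [hqeq, Fin.sum_univ_castSucc, h]
  simp [hz]
end

section
/- Let u₁,…,u_n, v₁,…,v_n be dual bases of ℝⁿ, V = span(p₁,…,p_{n−1}) with orthogonal complement spanned by q ≠ 0, and π(ξ) = (⟨p₁,ξ⟩,…,⟨p_{n−1},ξ⟩). Suppose π(v₁),…,π(v_{n−1}) are linearly independent and the cone generated by π(v₁),…,π(v_n) contains a nontrivial linear subspace. Then either ⟨u_i, q⟩ ≥ 0 for all i ∈ {1,…,n} or ⟨u_i, q⟩ ≤ 0 for all i ∈ {1,…,n}. -/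
open Matrix BigOperators

/-- in the setting of Statement 10, the pairings `⟨uᵢ,q⟩` all
have the same sign. -/
theorem pairing_same_sign_of_cone_subspace (n : ℕ)
    (u v : Fin (n + 1) → Fin (n + 1) → ℝ)
    (hdual : ∀ i j, dotProduct (u i) (v j) = if i = j then 1 else 0)
    (p : Fin n → Fin (n + 1) → ℝ)
    (hp : LinearIndependent ℝ p)
    (q : Fin (n + 1) → ℝ) (hq : q ≠ 0)
    (horth : ∀ l, dotProduct (p l) q = 0)
    (hLI : LinearIndependent ℝ
      (fun i : Fin n => fun l => dotProduct (p l) (v i.castSucc)))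
    (x : Fin n → ℝ) (hx : x ≠ 0)
    (hxc : ∃ a : Fin (n + 1) → ℝ, (∀ i, 0 ≤ a i) ∧
      x = ∑ j, a j • (fun l => dotProduct (p l) (v j)))
    (hnxc : ∃ b : Fin (n + 1) → ℝ, (∀ i, 0 ≤ b i) ∧
      -x = ∑ j, b j • (fun l => dotProduct (p l) (v j))) :
    (∀ i, 0 ≤ dotProduct (u i) q) ∨
      (∀ i, dotProduct (u i) q ≤ 0) := by
  obtain ⟨a, ha, hxa⟩ := hxc
  obtain ⟨b, hb, hxb⟩ := hnxc
  set w : Fin (n + 1) → Fin n → ℝ :=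
    fun j => fun l => dotProduct (p l) (v j) with hw
  set c : Fin (n + 1) → ℝ := fun j => dotProduct (u j) q with hc
  rw [Fintype.linearIndependent_iff] at hLI
  -- matrices
  have hA : (Matrix.of u) * (Matrix.of v)ᵀ = 1 := by
    ext i j
    simpa [Matrix.mul_apply, Matrix.one_apply, dotProduct] using hdual i j
  have hB : (Matrix.of v)ᵀ * (Matrix.of u) = 1 := mul_eq_one_comm.mp hA
  -- q = ∑ c j • v j
  have hqrep : ∀ k, q k = ∑ j, c j * v j k := by
    intro k
    have h2 : (Matrix.of v)ᵀ.mulVec ((Matrix.of u).mulVec q) = q := by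
      rw [Matrix.mulVec_mulVec, hB, Matrix.one_mulVec]
    have := congrFun h2 k
    simpa [Matrix.mulVec, dotProduct, hc, mul_comm] using this.symm
  -- π(q) = 0
  have hπq : ∑ j, c j • w j = 0 := by
    funext l
    have h0 : ∑ j, c j * dotProduct (p l) (v j) = dotProduct (p l) q := by
      simp only [dotProduct, hqrep, Finset.mul_sum]
      rw [Finset.sum_comm]
      exact Finset.sum_congr rfl fun k _ => Finset.sum_congr rfl fun j _ => by ring
    have := h0.trans (horth l)
    simpa [hw] using this
  -- c last ≠ 0
  have hclast : c (Fin.last n) ≠ 0 := by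
    intro h0
    have h1 : ∑ j : Fin n, c j.castSucc • w j.castSucc = 0 := by
      have h2 := hπq
      rw [Fin.sum_univ_castSucc (fun j => c j • w j)] at h2
      simpa [h0] using h2
    have hz : ∀ j : Fin n, c j.castSucc = 0 := hLI _ h1
    have hq0 : q = 0 := by
      funext k
      rw [hqrep k, Fin.sum_univ_castSucc]
      simp [hz, h0]
    exact hq hq0
  -- s = a + b
  set s : Fin (n + 1) → ℝ := fun j => a j + b j with hs
  have hs0 : ∀ j, 0 ≤ s j := fun j => add_nonneg (ha j) (hb j)
  have hssum : ∑ j, s j • w j = 0 := by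
    have h0 : ∑ j, (a j • w j + b j • w j) = 0 := by
      rw [Finset.sum_add_distrib, ← hxa, ← hxb]
      simp
    rw [← h0]
    exact Finset.sum_congr rfl fun j _ => by rw [hs]; simp [add_smul]
  -- key relation
  have hkey : ∀ j : Fin n,
      c (Fin.last n) * s j.castSucc - s (Fin.last n) * c j.castSucc = 0 := by
    apply hLI
    funext l
    have h1 := congrFun hssum l
    have h2 := congrFun hπq l
    simp only [Finset.sum_apply, Pi.smul_apply, smul_eq_mul, Pi.zero_apply] at h1 h2 ⊢
    rw [Fin.sum_univ_castSucc (fun j => s j * w j l)] at h1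
    rw [Fin.sum_univ_castSucc (fun j => c j * w j l)] at h2
    set L := Fin.last n
    calc ∑ j : Fin n, (c L * s j.castSucc - s L * c j.castSucc) * w j.castSucc l
        = ∑ j : Fin n, (c L * (s j.castSucc * w j.castSucc l)
            - s L * (c j.castSucc * w j.castSucc l)) :=
          Finset.sum_congr rfl fun j _ => by ring
      _ = c L * (∑ j : Fin n, s j.castSucc * w j.castSucc l)
            - s L * (∑ j : Fin n, c j.castSucc * w j.castSucc l) := by
          rw [Finset.sum_sub_distrib, Finset.mul_sum, Finset.mul_sum]
      _ = c L * ((∑ j : Fin n, s j.castSucc * w j.castSucc l) + s L * w L l)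
            - s L * ((∑ j : Fin n, c j.castSucc * w j.castSucc l) + c L * w L l) := by ring
      _ = 0 := by rw [h1, h2]; ring
  -- s last > 0
  have hslast : 0 < s (Fin.last n) := by
    rcases (hs0 (Fin.last n)).lt_or_eq with h | h
    · exact h
    · exfalso
      have hsz : ∀ j : Fin (n + 1), s j = 0 := by
        intro j
        induction j using Fin.lastCases with
        | last => exact h.symm
        | cast j =>
          have hk := hkey j
          rw [← h] at hk
          simp only [mul_zero, zero_mul, sub_zero, zero_sub, neg_eq_zero] at hk
          rcases mul_eq_zero.mp hk with h' | h'
          · exact absurd h' hclast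
          · exact h'
      have haz : ∀ j, a j = 0 := by
        intro j
        have := hsz j
        have hab : a j + b j = 0 := this
        linarith [ha j, hb j]
      exact hx (by rw [hxa]; simp [haz])
  -- conclude
  rcases lt_or_gt_of_ne hclast with hneg | hpos
  · right
    intro i
    induction i using Fin.lastCases with
    | last => exact hneg.le
    | cast j =>
      have hk := hkey j
      nlinarith [hs0 j.castSucc, mul_nonpos_of_nonpos_of_nonneg hneg.le (hs0 j.castSucc)]
  · left
    intro i
    induction i using Fin.lastCases with
    | last => exact hpos.le
    | cast j =>
      have hk := hkey j
      nlinarith [hs0 j.castSucc, mul_nonneg hpos.le (hs0 j.castSucc)]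
end

section
/- Let u₁,…,u_n, v₁,…,v_n be dual bases of ℝⁿ, q ≠ 0 orthogonal to span(p₁,…,p_{n−1}), and π(ξ) = (⟨p₁,ξ⟩,…,⟨p_{n−1},ξ⟩). Suppose π(v₁),…,π(v_{n−1}) are linearly independent, all π(v_j) are nonzero, and π(v_n) lies in the cone generated by π(v₁),…,π(v_{n−1}), say π(v_n) = Σ_{j=1}^{n−1} S_j π(v_j) with S_j ≥ 0. Then ⟨u_n, q⟩ ≠ 0, ⟨u_j, q⟩ = −S_j ⟨u_n, q⟩ for j = 1,…,n−1, and consequently the coefficients ⟨u₁,q⟩,…,⟨u_{n−1},q⟩ all have sign opposite to (or zero relative to) ⟨u_n,q⟩. -/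
open Matrix BigOperators

/-- with dual bases `u, v`, `q ≠ 0` orthogonal to the `p l`,
`π(v₁),…,π(vₙ)` linearly independent, all `π(vⱼ)` nonzero, and
`π(vₙ₊₁) = ∑ⱼ Sⱼ π(vⱼ)` with `Sⱼ ≥ 0`, one has `⟨uₙ₊₁,q⟩ ≠ 0`,
`⟨uⱼ,q⟩ = -Sⱼ⟨uₙ₊₁,q⟩`, and opposite signs. -/
theorem pairing_relations_at_good_vertex (n : ℕ)
    (u v : Fin (n + 1) → Fin (n + 1) → ℝ)
    (hdual : ∀ i j, dotProduct (u i) (v j) = if i = j then 1 else 0)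
    (p : Fin n → Fin (n + 1) → ℝ)
    (q : Fin (n + 1) → ℝ) (hq : q ≠ 0)
    (horth : ∀ l, dotProduct (p l) q = 0)
    (hLI : LinearIndependent ℝ
      (fun i : Fin n => fun l => dotProduct (p l) (v i.castSucc)))
    (hne : ∀ j : Fin (n + 1),
      (fun l => dotProduct (p l) (v j)) ≠ (0 : Fin n → ℝ))
    (S : Fin n → ℝ) (hS : ∀ j, 0 ≤ S j)
    (hcone : (fun l => dotProduct (p l) (v (Fin.last n))) =
      ∑ j : Fin n, S j • (fun l => dotProduct (p l) (v j.castSucc))) :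
    dotProduct (u (Fin.last n)) q ≠ 0 ∧
      (∀ j : Fin n, dotProduct (u j.castSucc) q =
        -S j * dotProduct (u (Fin.last n)) q) ∧
      ∀ j : Fin n, dotProduct (u j.castSucc) q *
        dotProduct (u (Fin.last n)) q ≤ 0 := by
  classical
  set a : Fin (n + 1) → ℝ := fun i => dotProduct (u i) q with ha
  -- matrices
  set U : Matrix (Fin (n + 1)) (Fin (n + 1)) ℝ := Matrix.of u with hU
  set V : Matrix (Fin (n + 1)) (Fin (n + 1)) ℝ := Matrix.of (fun k j => v j k) with hV
  have hUV : U * V = 1 := by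
    ext i j
    simpa [Matrix.mul_apply, Matrix.one_apply, dotProduct, hU, hV] using hdual i j
  have hVU : V * U = 1 := mul_eq_one_comm.mp hUV
  have hqrep : ∀ k, q k = ∑ j, v j k * a j := by
    intro k
    have h1 : (V * U) *ᵥ q = q := by rw [hVU, Matrix.one_mulVec]
    have h2 := congrFun h1 k
    rw [← Matrix.mulVec_mulVec] at h2
    simpa [Matrix.mulVec, dotProduct, hU, hV, ha] using h2.symm
  -- orthogonality expansion
  have hsum : ∀ l, ∑ j : Fin (n + 1), a j * dotProduct (p l) (v j) = 0 := by
    intro l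
    have := horth l
    rw [dotProduct] at this
    calc ∑ j : Fin (n + 1), a j * dotProduct (p l) (v j)
        = ∑ j, ∑ k, p l k * (v j k * a j) := by
          apply Finset.sum_congr rfl; intro j _
          rw [dotProduct, Finset.mul_sum]; apply Finset.sum_congr rfl; intro k _; ring
      _ = ∑ k, p l k * q k := by
          rw [Finset.sum_comm]
          apply Finset.sum_congr rfl; intro k _
          rw [hqrep k, Finset.mul_sum]
      _ = 0 := this
  -- split off the last term and substitute the cone relation
  have hkey : ∀ j : Fin n, a j.castSucc + a (Fin.last n) * S j = 0 := by
    have hLI' := Fintype.linearIndependent_iff.mp hLI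
    apply hLI' (fun j => a j.castSucc + a (Fin.last n) * S j)
    funext l
    have h3 := hsum l
    rw [Fin.sum_univ_castSucc] at h3
    have h4 : dotProduct (p l) (v (Fin.last n)) =
        ∑ j : Fin n, S j * dotProduct (p l) (v j.castSucc) := by
      have := congrFun hcone l
      simpa [Finset.sum_apply] using this
    rw [h4, Finset.mul_sum] at h3
    simp only [Finset.sum_apply, Pi.smul_apply, smul_eq_mul, Pi.zero_apply]
    rw [← Finset.sum_add_distrib] at h3
    rw [← h3]
    apply Finset.sum_congr rfl; intro j _; ring
  have hlast : a (Fin.last n) ≠ 0 := by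
    intro h0
    apply hq
    funext k
    have hz : ∀ j, a j = 0 := by
      intro j
      refine Fin.lastCases h0 (fun i => ?_) j
      have := hkey i
      rw [h0] at this
      linarith
    simp [hqrep k, hz]
  refine ⟨hlast, fun j => by have := hkey j; linarith, fun j => ?_⟩
  have hj : a j.castSucc = -S j * a (Fin.last n) := by have := hkey j; linarith
  simp only [ha] at hj
  have h5 : 0 ≤ S j * (dotProduct (u (Fin.last n)) q * dotProduct (u (Fin.last n)) q) :=
    mul_nonneg (hS j) (mul_self_nonneg _)
  rw [hj]
  linarith [h5]
end

section
/- Let p₁,…,p_{n−1}, q ∈ ℝⁿ with q ⊥ p_l for all l, let u₁,…,u_n, v₁,…,v_n be dual bases of ℝⁿ with det[v₁ ⋯ v_n] = ±1, and π(ξ) = (⟨p₁,ξ⟩,…,⟨p_{n−1},ξ⟩). Assume ⟨u_n, q⟩ = −1. Then det [p₁ ⋯ p_{n−1} q] = ±⟨q,q⟩ · det [π(v₁) ⋯ π(v_{n−1})], where the last determinant is of the (n−1)×(n−1) matrix with columns π(v_j) ∈ ℝ^{n−1}. -/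
open Matrix BigOperators

/-- real determinant identity. With `q ⊥ pₗ`, dual bases `u, v`
with `det [v₁ ⋯ vₙ₊₁] = ±1`, and `⟨uₙ₊₁, q⟩ = -1`, one has
`det [p₁ ⋯ pₙ q] = ±⟨q,q⟩ · det [π(v₁) ⋯ π(vₙ)]`. -/
theorem det_cols_eq_pm_qq_mul_det_proj (n : ℕ)
    (p : Fin n → Fin (n + 1) → ℝ) (q : Fin (n + 1) → ℝ)
    (horth : ∀ l, dotProduct (p l) q = 0)
    (u v : Fin (n + 1) → Fin (n + 1) → ℝ)
    (hdual : ∀ i j, dotProduct (u i) (v j) = if i = j then 1 else 0)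
    (hdetv : Matrix.det (Matrix.of fun i j => v j i) = 1 ∨
      Matrix.det (Matrix.of fun i j => v j i) = -1)
    (huq : dotProduct (u (Fin.last n)) q = -1) :
    Matrix.det (Matrix.of fun i j =>
        (Fin.snoc p q : Fin (n + 1) → Fin (n + 1) → ℝ) j i) =
      dotProduct q q *
        Matrix.det (Matrix.of fun l (j : Fin n) =>
          dotProduct (p l) (v j.castSucc)) ∨
    Matrix.det (Matrix.of fun i j =>
        (Fin.snoc p q : Fin (n + 1) → Fin (n + 1) → ℝ) j i) =
      -(dotProduct q q *
        Matrix.det (Matrix.of fun l (j : Fin n) =>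
          dotProduct (p l) (v j.castSucc))) := by
  classical
  set U : Matrix (Fin (n+1)) (Fin (n+1)) ℝ := Matrix.of u with hU
  set V : Matrix (Fin (n+1)) (Fin (n+1)) ℝ := Matrix.of fun i j => v j i with hV
  have hUV : U * V = 1 := by
    ext i j
    simpa [U, V, Matrix.mul_apply, Matrix.one_apply, dotProduct] using hdual i j
  have hVU : V * U = 1 := mul_eq_one_comm.mp hUV
  have key : ∀ x : Fin (n+1) → ℝ, ∀ k, x k = ∑ i, dotProduct (u i) x * v i k := by
    intro x k
    have h1 : V.mulVec (U.mulVec x) = x := by rw [Matrix.mulVec_mulVec, hVU, Matrix.one_mulVec]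
    calc x k = V.mulVec (U.mulVec x) k := (congrFun h1 k).symm
      _ = ∑ i, dotProduct (u i) x * v i k := by
          simp [Matrix.mulVec, dotProduct, U, V, mul_comm]
  have hdot : ∀ a : Fin (n+1) → ℝ,
      dotProduct a q = ∑ i, dotProduct (u i) q * dotProduct a (v i) := by
    intro a
    have hterm : ∀ k, a k * q k = ∑ i, dotProduct (u i) q * (a k * v i k) := by
      intro k
      rw [key q k, Finset.mul_sum]
      exact Finset.sum_congr rfl fun i _ => by ring
    calc dotProduct a q = ∑ k, a k * q k := rfl
      _ = ∑ k, ∑ i, dotProduct (u i) q * (a k * v i k) :=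
          Finset.sum_congr rfl fun k _ => hterm k
      _ = ∑ i, ∑ k, dotProduct (u i) q * (a k * v i k) := Finset.sum_comm
      _ = ∑ i, dotProduct (u i) q * dotProduct a (v i) := by
          refine Finset.sum_congr rfl fun i _ => ?_
          simp only [dotProduct, Finset.mul_sum]
  have hp : ∀ l, dotProduct (p l) (v (Fin.last n)) =
      ∑ j : Fin n, dotProduct (u j.castSucc) q * dotProduct (p l) (v j.castSucc) := by
    intro l
    have h := hdot (p l)
    rw [horth l, Fin.sum_univ_castSucc, huq] at h
    linarith
  have hq : dotProduct q (v (Fin.last n)) =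
      (∑ j : Fin n, dotProduct (u j.castSucc) q * dotProduct q (v j.castSucc))
        - dotProduct q q := by
    have h := hdot q
    rw [Fin.sum_univ_castSucc, huq] at h
    linarith
  -- the matrices
  set B : Matrix (Fin (n+1)) (Fin (n+1)) ℝ := Matrix.of (Fin.snoc p q) with hB
  set T : Matrix (Fin (n+1)) (Fin (n+1)) ℝ :=
    Matrix.of (fun j l => dotProduct ((Fin.snoc p q : Fin (n+1) → Fin (n+1) → ℝ) l) (v j)) with hT
  have hBVT : (B * V)ᵀ = T := by
    ext j l
    simp [B, V, T, Matrix.mul_apply, dotProduct]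
  -- coefficient function
  set c' : Fin (n+1) → ℝ := fun k => if k = Fin.last n then 0 else dotProduct (u k) q
    with hc'
  set w : Fin (n+1) → ℝ := fun l => if l = Fin.last n then -(dotProduct q q) else 0 with hw
  have hrow : T (Fin.last n) = (∑ k, c' k • T k) + w := by
    funext l
    have hsum : ∀ l', (∑ k, c' k • T k) l'
        = ∑ j : Fin n, dotProduct (u j.castSucc) q *
            dotProduct ((Fin.snoc p q : Fin (n+1) → Fin (n+1) → ℝ) l') (v j.castSucc) := by
      intro l'
      rw [Fin.sum_univ_castSucc (f := fun k => c' k • T k)]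
      simp only [Finset.sum_apply, Pi.add_apply, Pi.smul_apply, smul_eq_mul]
      have hlast : c' (Fin.last n) = 0 := by simp [c']
      rw [hlast]
      simp only [zero_mul, add_zero]
      refine Finset.sum_congr rfl fun j _ => ?_
      have : c' j.castSucc = dotProduct (u j.castSucc) q := by
        simp [c', Fin.ne_of_lt (Fin.castSucc_lt_last j)]
      rw [this]
      rfl
    refine Fin.lastCases ?_ ?_ l
    · have : T (Fin.last n) (Fin.last n) = dotProduct q (v (Fin.last n)) := by
        simp [T]
      rw [Pi.add_apply, hsum _]
      simp only [T, Matrix.of_apply, Fin.snoc_last, w, if_pos rfl]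
      rw [hq]; ring
    · intro m
      rw [Pi.add_apply, hsum _]
      have hwm : w m.castSucc = 0 := by
        simp [w, Fin.ne_of_lt (Fin.castSucc_lt_last m)]
      rw [hwm, add_zero]
      simp only [T, Matrix.of_apply, Fin.snoc_castSucc]
      exact hp m
  -- determinant computation
  set D : Matrix (Fin (n+1)) (Fin (n+1)) ℝ := T.updateRow (Fin.last n) w with hD
  have hdetT : T.det = D.det := by
    conv_lhs => rw [← Matrix.updateRow_eq_self T (Fin.last n), hrow]
    rw [Matrix.det_updateRow_add, Matrix.det_updateRow_sum]
    have : c' (Fin.last n) = 0 := by simp [c']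
    rw [this]
    simp [D]
  set Pi' : Matrix (Fin n) (Fin n) ℝ :=
    Matrix.of fun l (j : Fin n) => dotProduct (p l) (v j.castSucc) with hPi
  have hsub : D.submatrix (Fin.last n).succAbove (Fin.last n).succAbove = Pi'ᵀ := by
    ext j l
    simp only [Matrix.submatrix_apply, Fin.succAbove_last, D]
    rw [Matrix.updateRow_ne (Fin.ne_of_lt (Fin.castSucc_lt_last j))]
    simp [T, Pi']
  have hdetD : D.det = -(dotProduct q q) * Pi'.det := by
    rw [Matrix.det_succ_row D (Fin.last n)]
    rw [Finset.sum_eq_single (Fin.last n)]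
    · have hDl : D (Fin.last n) (Fin.last n) = -(dotProduct q q) := by
        simp [D, w]
      rw [hDl, hsub, Matrix.det_transpose]
      have : (-1 : ℝ) ^ ((Fin.last n : ℕ) + (Fin.last n : ℕ)) = 1 := by
        simp [Fin.val_last, ← two_mul, pow_mul]
      rw [this]; ring
    · intro b _ hb
      have : D (Fin.last n) b = 0 := by simp [D, w, hb]
      rw [this]; ring
    · intro h; exact absurd (Finset.mem_univ _) h
  -- combine
  have hmain : B.det * V.det = -(dotProduct q q) * Pi'.det := by
    have : (B * V).det = T.det := by rw [← hBVT, Matrix.det_transpose]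
    rw [Matrix.det_mul] at this
    rw [this, hdetT, hdetD]
  have hgoal : (Matrix.of fun i j =>
      (Fin.snoc p q : Fin (n + 1) → Fin (n + 1) → ℝ) j i).det = B.det := by
    have : (Matrix.of fun i j =>
        (Fin.snoc p q : Fin (n + 1) → Fin (n + 1) → ℝ) j i) = Bᵀ := by
      ext i j; rfl
    rw [this, Matrix.det_transpose]
  rw [hgoal]
  rcases hdetv with h1 | h1
  · right
    rw [h1, mul_one] at hmain
    rw [hmain]; ring
  · left
    rw [h1] at hmain
    have : B.det = dotProduct q q * Pi'.det := by linarith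
    rw [this]
end

section
/- Let p₁,…,p_{n−1} ∈ ℤⁿ be a ℤ-basis of V ∩ ℤⁿ (V their real span, (n−1)-dimensional), q ∈ ℤⁿ primitive with q ⊥ V, u₁,…,u_n, v₁,…,v_n dual ℤ-bases of ℤⁿ, and π(ξ) = (⟨p₁,ξ⟩,…,⟨p_{n−1},ξ⟩). If ⟨u_n, q⟩ = −1, then det [π(v₁) ⋯ π(v_{n−1})] = ±1; that is, π(v₁),…,π(v_{n−1}) form a ℤ-basis of ℤ^{n−1}. -/
open Matrix BigOperators

/-- Bézout for finite families of integers. -/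
lemma finset_gcd_bezout {ι : Type*} [DecidableEq ι] (s : Finset ι) (f : ι → ℤ) :
    ∃ c : ι → ℤ, ∑ i ∈ s, c i * f i = s.gcd f := by
  induction s using Finset.cons_induction with
  | empty => exact ⟨0, by simp⟩
  | cons a s ha ih =>
    obtain ⟨c, hc⟩ := ih
    refine ⟨Function.update (fun i => Int.gcdB (f a) (s.gcd f) * c i) a
      (Int.gcdA (f a) (s.gcd f)), ?_⟩
    rw [Finset.sum_cons, Finset.cons_eq_insert, Finset.gcd_insert,
      ← Int.coe_gcd, Int.gcd_eq_gcd_ab, Function.update_self]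
    have h2 : ∑ i ∈ s, Function.update (fun i => Int.gcdB (f a) (s.gcd f) * c i) a
        (Int.gcdA (f a) (s.gcd f)) i * f i
        = Int.gcdB (f a) (s.gcd f) * ∑ i ∈ s, c i * f i := by
      rw [Finset.mul_sum]
      refine Finset.sum_congr rfl fun i hi => ?_
      rw [Function.update_of_ne (ne_of_mem_of_not_mem hi ha)]
      ring
    rw [h2, hc]; ring

/-- dot product with `y - t • w`. -/
lemma dot_sub_smul {m : ℕ} (q y w : Fin m → ℤ) (t : ℤ) :
    dotProduct q (y - t • w)
      = dotProduct q y - t * dotProduct q w := by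
  simp only [dotProduct, Pi.sub_apply, Pi.smul_apply, smul_eq_mul, mul_sub,
    Finset.sum_sub_distrib, Finset.mul_sum]
  congr 1
  exact Finset.sum_congr rfl fun i _ => by ring

/-- if `p` is a ℤ-basis of `V ∩ ℤ^(n+1)`, `q` primitive
orthogonal to `V`, `u, v` dual ℤ-bases of `ℤ^(n+1)`, and `⟨uₙ₊₁,q⟩ = -1`, then
`det [π(v₁) ⋯ π(vₙ)] = ±1`, i.e. the `π(vⱼ)` form a ℤ-basis of `ℤⁿ`. -/
theorem det_proj_eq_pm_one (n : ℕ)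
    (p : Fin n → Fin (n + 1) → ℤ) (q : Fin (n + 1) → ℤ)
    (hLI : LinearIndependent ℝ (fun i => fun j => ((p i j : ℝ))))
    (hpbasis : ∀ x : Fin (n + 1) → ℤ,
      ((fun j => (x j : ℝ)) ∈
          Submodule.span ℝ (Set.range (fun i => fun j => ((p i j : ℝ))))) →
        ∃ c : Fin n → ℤ, x = ∑ i, c i • p i)
    (hprim : Finset.univ.gcd q = 1)
    (horth : ∀ l, dotProduct (p l) q = 0)
    (u v : Fin (n + 1) → Fin (n + 1) → ℤ)
    (hdual : ∀ i j, dotProduct (u i) (v j) = if i = j then 1 else 0)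
    (huq : dotProduct (u (Fin.last n)) q = -1) :
    Matrix.det (Matrix.of fun l (j : Fin n) =>
        dotProduct (p l) (v j.castSucc)) = 1 ∨
    Matrix.det (Matrix.of fun l (j : Fin n) =>
        dotProduct (p l) (v j.castSucc)) = -1 := by
  classical
  -- q is nonzero
  have hqne : ∃ j, q j ≠ 0 := by
    by_contra h
    push_neg at h
    have : Finset.univ.gcd q = 0 := Finset.gcd_eq_zero_iff.2 fun i _ => h i
    simp [this] at hprim
  obtain ⟨j₀, hj₀⟩ := hqne
  have hqq_pos : 0 < dotProduct q q := by
    have : (0:ℤ) < ∑ j, q j * q j := by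
      refine Finset.sum_pos' (fun i _ => mul_self_nonneg _) ⟨j₀, Finset.mem_univ _, ?_⟩
      exact mul_self_pos.2 hj₀
    simpa [dotProduct] using this
  set qq := dotProduct q q with hqqdef
  -- the real linear functional ⟨q, ·⟩
  set φ : (Fin (n+1) → ℝ) →ₗ[ℝ] ℝ :=
    { toFun := fun x => ∑ j, (q j : ℝ) * x j
      map_add' := by intro a b; simp [mul_add, Finset.sum_add_distrib]
      map_smul' := by
        intro r a
        simp only [Pi.smul_apply, smul_eq_mul, RingHom.id_apply, Finset.mul_sum]
        exact Finset.sum_congr rfl fun i _ => by ring } with hφdef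
  -- the real span of the `p` equals `ker φ`
  have hW : Submodule.span ℝ (Set.range (fun i => fun j => ((p i j : ℝ))))
      = LinearMap.ker φ := by
    have hle : Submodule.span ℝ (Set.range (fun i => fun j => ((p i j : ℝ))))
        ≤ LinearMap.ker φ := by
      rw [Submodule.span_le]
      rintro _ ⟨l, rfl⟩
      have := horth l
      have : ((dotProduct (p l) q : ℤ) : ℝ) = 0 := by rw [this]; simp
      simp only [SetLike.mem_coe, LinearMap.mem_ker, hφdef, LinearMap.coe_mk,
        AddHom.coe_mk]
      rw [← this]
      push_cast [dotProduct]
      exact Finset.sum_congr rfl fun i _ => by ring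
    have hx₀ : φ (Pi.single j₀ (1:ℝ)) = (q j₀ : ℝ) := by
      simp only [hφdef, LinearMap.coe_mk, AddHom.coe_mk]
      rw [Finset.sum_eq_single j₀]
      · simp
      · intro b _ hb; simp [Pi.single_eq_of_ne hb]
      · simp
    have hx₀ne : φ (Pi.single j₀ (1:ℝ)) ≠ 0 := by
      rw [hx₀]; exact_mod_cast hj₀
    have hrange : LinearMap.range φ = ⊤ := by
      rw [LinearMap.range_eq_top]
      intro r
      refine ⟨(r / φ (Pi.single j₀ (1:ℝ))) • (Pi.single j₀ 1 : Fin (n+1) → ℝ), ?_⟩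
      rw [_root_.map_smul, smul_eq_mul, div_mul_cancel₀ _ hx₀ne]
    have hker : Module.finrank ℝ (LinearMap.ker φ) ≤ n := by
      have h1 := LinearMap.finrank_range_add_finrank_ker φ
      rw [hrange] at h1
      have h2 : Module.finrank ℝ (Fin (n+1) → ℝ) = n + 1 := by
        simp [Module.finrank_pi]
      rw [finrank_top, h2] at h1
      have h3 : Module.finrank ℝ ℝ = 1 := Module.finrank_self ℝ
      omega
    have hWrank : Module.finrank ℝ
        (Submodule.span ℝ (Set.range (fun i => fun j => ((p i j : ℝ))))) = n := by
      rw [finrank_span_eq_card hLI]; simp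
    exact Submodule.eq_of_le_of_finrank_le hle (by rw [hWrank]; exact hker)
  -- integer vectors orthogonal to q are integer combinations of the `p`
  have hspan : ∀ x : Fin (n+1) → ℤ, dotProduct q x = 0 →
      ∃ c : Fin n → ℤ, x = ∑ i, c i • p i := by
    intro x hx
    apply hpbasis
    rw [hW]
    simp only [LinearMap.mem_ker, hφdef, LinearMap.coe_mk, AddHom.coe_mk]
    have : ((dotProduct q x : ℤ) : ℝ) = 0 := by rw [hx]; simp
    rw [← this]
    push_cast [dotProduct]
    rfl
  -- a vector w with ⟨q, w⟩ = 1
  obtain ⟨w, hw⟩ := finset_gcd_bezout (Finset.univ) q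
  rw [hprim] at hw
  have hqw : dotProduct q w = 1 := by
    rw [← hw]
    exact Finset.sum_congr rfl fun i _ => by ring
  -- the matrix B with rows p₀, …, p_{n-1}, w
  set B : Matrix (Fin (n+1)) (Fin (n+1)) ℤ := Matrix.of (Fin.snoc p w) with hBdef
  have hBlast : B (Fin.last n) = w := by
    funext j
    rw [hBdef]
    simp [Fin.snoc_last]
  have hBcast : ∀ l, B l.castSucc = p l := by
    intro l
    funext j
    rw [hBdef]
    simp [Fin.snoc_castSucc]
  -- B is unimodular
  have hBdet : IsUnit B.det := by
    rw [← Matrix.isUnit_iff_isUnit_det, ← Matrix.vecMul_surjective_iff_isUnit]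
    intro y
    have hx : dotProduct q (y - dotProduct q y • w) = 0 := by
      rw [dot_sub_smul, hqw]; ring
    obtain ⟨c, hc⟩ := hspan _ hx
    refine ⟨(Fin.snoc c (dotProduct q y) : Fin (n+1) → ℤ), ?_⟩
    funext j
    have hc' := congrFun hc j
    simp only [Pi.sub_apply, Pi.smul_apply, smul_eq_mul, Finset.sum_apply] at hc'
    simp only [Matrix.vecMul, dotProduct]
    rw [Fin.sum_univ_castSucc]
    simp only [Fin.snoc_castSucc, Fin.snoc_last, hBlast]
    have h3 : ∀ l : Fin n, c l * B l.castSucc j = c l * p l j := by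
      intro l; rw [hBcast]
    rw [Finset.sum_congr rfl fun l _ => h3 l]
    have h4 : ∑ l : Fin n, c l * p l j = y j - dotProduct q y * w j := by
      rw [← hc']
    rw [h4]
    have h5 : ∑ x : Fin (n+1), q x * y x = dotProduct q y := rfl
    rw [h5]; ring
  -- decompose q over the rows of B
  have hxq : dotProduct q (q - qq • w) = 0 := by
    rw [dot_sub_smul, hqw, hqqdef]; ring
  obtain ⟨c₁, hc₁⟩ := hspan _ hxq
  have hqdecomp : q = ∑ k : Fin (n+1),
      ((Fin.snoc c₁ qq : Fin (n+1) → ℤ) k) • B k := by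
    rw [Fin.sum_univ_castSucc]
    simp only [Fin.snoc_castSucc, Fin.snoc_last, hBlast]
    have : ∀ l : Fin n, (c₁ l) • B l.castSucc = c₁ l • p l := by
      intro l; rw [hBcast]
    rw [Finset.sum_congr rfl fun l _ => this l, ← hc₁]
    funext j; simp
  -- M : B with its last row replaced by q
  set M : Matrix (Fin (n+1)) (Fin (n+1)) ℤ := B.updateRow (Fin.last n) q with hMdef
  have hMdet : M.det = qq * B.det := by
    have := Matrix.det_updateRow_sum B (Fin.last n) ((Fin.snoc c₁ qq : Fin (n+1) → ℤ))
    rw [hMdef, hqdecomp]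
    simpa [Fin.snoc_last] using this
  have hMlast : M (Fin.last n) = q := by simp [hMdef]
  have hMcast : ∀ l, M l.castSucc = p l := by
    intro l
    rw [hMdef, Matrix.updateRow_ne (Fin.castSucc_lt_last l).ne, hBcast]
  -- the dual basis matrices
  set Umat : Matrix (Fin (n+1)) (Fin (n+1)) ℤ := Matrix.of u with hUdef
  set Vmat : Matrix (Fin (n+1)) (Fin (n+1)) ℤ := Matrix.of v with hVdef
  have hUV : Umat * Vmatᵀ = 1 := by
    ext i j
    simp only [Matrix.mul_apply, hUdef, hVdef, Matrix.transpose_apply, Matrix.of_apply,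
      Matrix.one_apply]
    exact hdual i j
  have hVU : Vmatᵀ * Umat = 1 := mul_eq_one_comm.mp hUV
  have hVdet : IsUnit Vmat.det := by
    refine IsUnit.of_mul_eq_one Umat.det ?_
    rw [← Matrix.det_transpose Vmat, ← Matrix.det_mul, hVU, Matrix.det_one]
  -- q in coordinates of the basis v
  have hqv : q = ∑ k : Fin (n+1), (dotProduct (u k) q) • v k := by
    funext j
    have key : ∀ m : Fin (n+1), ∑ k, v k j * u k m = if j = m then 1 else 0 := by
      intro m
      have := congrFun (congrFun hVU j) m
      simpa [Matrix.mul_apply, hUdef, hVdef, Matrix.transpose_apply,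
        Matrix.one_apply] using this
    have : ∑ k : Fin (n+1), (dotProduct (u k) q) * v k j
        = ∑ m : Fin (n+1), (∑ k, v k j * u k m) * q m := by
      simp only [dotProduct, Finset.sum_mul, Finset.mul_sum]
      rw [Finset.sum_comm]
      exact Finset.sum_congr rfl fun m _ => Finset.sum_congr rfl fun k _ => by ring
    simp only [Finset.sum_apply, Pi.smul_apply, smul_eq_mul]
    rw [this]
    simp [key]
  -- V' : Vmat with its last row replaced by q
  set V' : Matrix (Fin (n+1)) (Fin (n+1)) ℤ := Vmat.updateRow (Fin.last n) q
    with hV'def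
  have hV'det : V'.det = -Vmat.det := by
    have h1 : ∀ k : Fin (n+1), (dotProduct (u k) q) • v k
        = (dotProduct (u k) q) • Vmat k := by
      intro k; rw [hVdef]; rfl
    have := Matrix.det_updateRow_sum Vmat (Fin.last n)
      (fun k => dotProduct (u k) q)
    rw [hV'def, hqv, Finset.sum_congr rfl fun k _ => h1 k, this, huq]
    simp
  have hV'last : V' (Fin.last n) = q := by simp [hV'def]
  have hV'cast : ∀ l : Fin n, V' l.castSucc = v l.castSucc := by
    intro l
    rw [hV'def, Matrix.updateRow_ne (Fin.castSucc_lt_last l).ne, hVdef]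
    rfl
  -- the product matrix A' = M * V'ᵀ
  set A' : Matrix (Fin (n+1)) (Fin (n+1)) ℤ := M * V'ᵀ with hA'def
  have hA'app : ∀ i j, A' i j = dotProduct (M i) (V' j) := by
    intro i j
    simp [hA'def, Matrix.mul_apply, dotProduct]
  -- last column of A' vanishes except at the bottom
  have hA'lastcol : ∀ l : Fin n, A' l.castSucc (Fin.last n) = 0 := by
    intro l
    rw [hA'app, hMcast, hV'last]
    exact horth l
  have hA'corner : A' (Fin.last n) (Fin.last n) = qq := by
    rw [hA'app, hMlast, hV'last]
  -- determinant of A' computed via the product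
  have hdet1 : A'.det = qq * B.det * (-Vmat.det) := by
    rw [hA'def, Matrix.det_mul, Matrix.det_transpose, hMdet, hV'det]
  -- determinant of A' computed by expansion along the last column
  set N : Matrix (Fin n) (Fin n) ℤ := Matrix.of fun l (j : Fin n) =>
      dotProduct (p l) (v j.castSucc) with hNdef
  have hsub : A'.submatrix (Fin.last n).succAbove (Fin.last n).succAbove = N := by
    ext l m
    rw [Matrix.submatrix_apply, Fin.succAbove_last_apply, Fin.succAbove_last_apply,
      hA'app, hMcast, hV'cast]
    rfl
  have hdet2 : A'.det = qq * N.det := by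
    rw [Matrix.det_succ_column A' (Fin.last n)]
    rw [Finset.sum_eq_single (Fin.last n)]
    · rw [hA'corner, hsub]
      have : ((Fin.last n : Fin (n+1)) : ℕ) = n := rfl
      rw [this, ← two_mul]
      simp [pow_mul, mul_assoc]
    · intro i _ hi
      have : ∃ l : Fin n, i = l.castSucc := by
        rcases Fin.eq_castSucc_or_eq_last i with h | h
        · exact h
        · exact absurd h hi
      obtain ⟨l, rfl⟩ := this
      rw [hA'lastcol]
      ring
    · intro h; exact absurd (Finset.mem_univ _) h
  -- conclude
  have hNunit : IsUnit N.det := by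
    have hcancel : N.det = B.det * (-Vmat.det) := by
      have := hdet1.symm.trans hdet2
      have h := mul_left_cancel₀ (ne_of_gt hqq_pos) (by linarith [this] : qq * N.det = qq * (B.det * (-Vmat.det)))
      exact h
    rw [hcancel]
    exact hBdet.mul hVdet.neg
  rw [← hNdef] at *
  exact Int.isUnit_iff.mp hNunit
end
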